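/- Let s, ρ, ω be positive real numbers and let λ ∈ ℂ satisfy Im(λ) ≤ -sω and |λ| ≤ ρω². Then with t = s/(ρ²ω³), one has |1 - i·t·λ|² ≤ 1 - s²/(ρ²ω²). -/

import Mathlib

theorem elman_one_step_estimate (s ρ ω : ℝ) (hs : 0 < s) (hρ : 0 < ρ) (hω : 0 < ω)
    (l : ℂ) (him : l.im ≤ -(s * ω)) (habs : ‖l‖ ≤ ρ * ω ^ 2)
    (t : ℝ) (ht : t = s / (ρ ^ 2 * ω ^ 3)) :
    ‖1 - Complex.I * (t : ℂ) * l‖ ^ 2 ≤ 1 - s ^ 2 / (ρ ^ 2 * ω ^ 2) := by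
  have ht' : t = s / (ρ ^ 2 * ω ^ 3) := ht
  have hts : t * (ρ ^ 2 * ω ^ 3) = s := by
    rw [ht']; field_simp
  have ht0 : 0 < t := by
    rw [ht']; positivity
  have hsq : ‖l‖ ^ 2 ≤ (ρ * ω ^ 2) ^ 2 := by
    have := norm_nonneg l
    nlinarith
  have hnormsq : ‖l‖ ^ 2 = l.re ^ 2 + l.im ^ 2 := by
    rw [Complex.sq_norm]
    simp [Complex.normSq_apply]; ring
  have key : ‖1 - Complex.I * (t : ℂ) * l‖ ^ 2
      = (1 + t * l.im) ^ 2 + (t * l.re) ^ 2 := by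
    rw [Complex.sq_norm]
    simp [Complex.normSq_apply, Complex.sub_re, Complex.sub_im, Complex.mul_re,
      Complex.mul_im]
    ring
  rw [key]
  have h1 : l.re ^ 2 + l.im ^ 2 ≤ (ρ * ω ^ 2) ^ 2 := by rw [← hnormsq]; exact hsq
  have hst : t = s / (ρ ^ 2 * ω ^ 3) := ht'
  have hρω : (0:ℝ) < ρ ^ 2 * ω ^ 3 := by positivity
  -- reduce to polynomial inequality after clearing denominators
  have : (1 + t * l.im) ^ 2 + (t * l.re) ^ 2
      ≤ 1 + 2 * t * l.im + t ^ 2 * (ρ * ω ^ 2) ^ 2 := by nlinarith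
  have h2 : 2 * t * l.im ≤ -2 * t * (s * ω) := by nlinarith
  have h3 : t ^ 2 * (ρ * ω ^ 2) ^ 2 = s ^ 2 / (ρ ^ 2 * ω ^ 2) := by
    rw [ht']; field_simp
  have h4 : -2 * t * (s * ω) = -2 * (s ^ 2 / (ρ ^ 2 * ω ^ 2)) := by
    rw [ht']; field_simp
  nlinarith [this, h2, h3, h4]
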